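/- With f_d and n_h related by ∑_{d≥0} f_d q^d = ∑_{h≤g} n_h q^{g-h}(1-q)^{2h-2}, the coefficients n_h vanish for all h < 0 if and only if there exists an integer c such that f_d − f_{2g−2−d} = c·(d+1−g) for all d ≥ 0 (where f_e is taken to be 0 for e < 0); in that case c = n_0. -/

import Mathlib

/-- The unit `1 - q` of `ℤ⟦q⟧`. -/
noncomputable def oneSubX : (PowerSeries ℤ)ˣ :=
  (show IsUnit (1 - PowerSeries.X : PowerSeries ℤ) from
    PowerSeries.isUnit_iff_constantCoeff.mpr
      (by rw [map_sub, PowerSeries.constantCoeff_X, map_one, sub_zero]; exact isUnit_one)).unit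

/-- The series `∑_{h ≤ g} n_h q^{g-h} (1-q)^{2h-2}`, reindexed by `m = g - h` (so the
sequence `n : ℕ → ℤ` records `n (g - h) = n_h`).  It is defined coefficientwise:
the coefficient of `q^d` is the (finite) sum of the contributions of the terms
`n_{g-m} q^m (1-q)^{2(g-m)-2}` for `m ≤ d`. -/
noncomputable def expansionSeries (g : ℤ) (n : ℕ → ℤ) : PowerSeries ℤ :=
  PowerSeries.mk fun d => ∑ m ∈ Finset.range (d + 1),
    n m * PowerSeries.coeff (R := ℤ) (d - m)
      ((oneSubX ^ (2 * (g - m) - 2) : (PowerSeries ℤ)ˣ) : PowerSeries ℤ)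



lemma oneSubX_val : (oneSubX : PowerSeries ℤ) = 1 - PowerSeries.X := IsUnit.unit_spec _

lemma coeff_one_sub_X_pow (k j : ℕ) :
    PowerSeries.coeff (R := ℤ) j ((1 - PowerSeries.X : PowerSeries ℤ) ^ k) = (-1)^j * (k.choose j) := by
  induction k generalizing j with
  | zero => cases j <;> simp [PowerSeries.coeff_one]
  | succ k ih =>
    have he : ((1 - PowerSeries.X : PowerSeries ℤ))^(k+1)
        = (1 - PowerSeries.X)^k - (1 - PowerSeries.X)^k * PowerSeries.X := by ring
    rw [he, map_sub]
    cases j with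
    | zero => simp [ih, PowerSeries.coeff_zero_mul_X]
    | succ j =>
      rw [PowerSeries.coeff_succ_mul_X, ih, ih, Nat.choose_succ_succ]
      push_cast
      ring

noncomputable def Dc (g m j : ℕ) : ℤ :=
  PowerSeries.coeff (R := ℤ) j ((oneSubX ^ (2 * ((g:ℤ) - m) - 2) : (PowerSeries ℤ)ˣ) : PowerSeries ℤ)

lemma Dc_zero (g m : ℕ) : Dc g m 0 = 1 := by
  unfold Dc
  rw [PowerSeries.coeff_zero_eq_constantCoeff_apply]
  have h1 : (PowerSeries.constantCoeff (R := ℤ))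
      ((oneSubX ^ (2 * ((g:ℤ) - m) - 2) : (PowerSeries ℤ)ˣ) : PowerSeries ℤ)
      = ((Units.map (PowerSeries.constantCoeff (R := ℤ)).toMonoidHom
          (oneSubX ^ (2 * ((g:ℤ) - m) - 2)) : ℤˣ) : ℤ) := rfl
  rw [h1, map_zpow]
  have h2 : Units.map (PowerSeries.constantCoeff (R := ℤ)).toMonoidHom oneSubX = 1 := by
    apply Units.ext
    simp [oneSubX_val]
  rw [h2, one_zpow, Units.val_one]

lemma Dc_lt (g m : ℕ) (hm : m < g) (j : ℕ) :
    Dc g m j = (-1)^j * ((2*(g-m)-2).choose j) := by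
  have he : (2 * ((g:ℤ) - m) - 2) = ((2*(g-m)-2 : ℕ) : ℤ) := by omega
  rw [Dc, he, zpow_natCast, Units.val_pow_eq_pow_val, oneSubX_val, coeff_one_sub_X_pow]

lemma Dc_self (g j : ℕ) : Dc g g j = (j:ℤ) + 1 := by
  have he : (2 * ((g:ℤ) - g) - 2) = -2 := by ring
  unfold Dc
  rw [he]
  have h2 : (oneSubX ^ (-2 : ℤ)) = PowerSeries.invOneSubPow ℤ 2 := by
    have h3 : oneSubX ^ (-2:ℤ) = (oneSubX ^ (2:ℕ))⁻¹ := by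
      rw [← zpow_natCast, ← zpow_neg]; norm_num
    rw [h3, inv_eq_iff_mul_eq_one]
    apply Units.ext
    rw [Units.val_mul, Units.val_pow_eq_pow_val, oneSubX_val,
      ← PowerSeries.invOneSubPow_inv_eq_one_sub_pow, Units.val_one]
    exact (PowerSeries.invOneSubPow ℤ 2).inv_val
  rw [h2]
  rw [show (2:ℕ) = 1 + 1 from rfl, PowerSeries.invOneSubPow_val_succ_eq_mk_add_choose,
    PowerSeries.coeff_mk]
  simp [Nat.choose_one_right]
  omega

noncomputable def Tc (g : ℕ) (n : ℕ → ℤ) (m : ℕ) (e : ℤ) : ℤ :=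
  if (m : ℤ) ≤ e then n m * Dc g m (e - m).toNat else 0

lemma Tc_gt {g : ℕ} {n : ℕ → ℤ} {m : ℕ} {e : ℤ} (h : e < m) : Tc g n m e = 0 :=
  if_neg (by omega)

lemma Tc_nzero {g : ℕ} {n : ℕ → ℤ} {m : ℕ} (h : n m = 0) (e : ℤ) : Tc g n m e = 0 := by
  unfold Tc; split_ifs <;> simp [h]

lemma Tc_self (g : ℕ) (n : ℕ → ℤ) (m : ℕ) : Tc g n m m = n m := by
  rw [Tc, if_pos (le_refl _)]
  simp [Dc_zero]

lemma neg_one_pow_sub {k j : ℕ} (hk : Even k) (hj : j ≤ k) : ((-1:ℤ))^(k-j) = (-1)^j := by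
  obtain ⟨a, ha⟩ := hk
  rcases Nat.even_or_odd j with ⟨b, hb⟩ | ⟨b, hb⟩
  · rw [Even.neg_one_pow ⟨a - b, by omega⟩, Even.neg_one_pow ⟨b, hb⟩]
  · rw [Odd.neg_one_pow ⟨a - b - 1, by omega⟩, Odd.neg_one_pow ⟨b, hb⟩]

lemma Tc_lt {g m : ℕ} (n : ℕ → ℤ) (hm : m < g) (e : ℤ) :
    Tc g n m e - Tc g n m (2*(g:ℤ)-2-e) = 0 := by
  unfold Tc
  split_ifs with h1 h2 h2
  · have hj : (e - m).toNat + (2*(g:ℤ)-2-e - m).toNat = 2*(g-m)-2 := by omega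
    rw [Dc_lt g m hm, Dc_lt g m hm,
      show ((2*(g:ℤ)-2-e - m).toNat) = (2*(g-m)-2) - (e - m).toNat from by omega,
      Nat.choose_symm (by omega), neg_one_pow_sub ⟨(g-m)-1, by omega⟩ (by omega)]
    ring
  · rw [Dc_lt g m hm, Nat.choose_eq_zero_of_lt (by omega)]
    simp
  · rw [Dc_lt g m hm, Nat.choose_eq_zero_of_lt (by omega)]
    simp
  · ring

lemma Tc_eq (g : ℕ) (n : ℕ → ℤ) (d : ℕ) :
    Tc g n g d - Tc g n g (2*(g:ℤ)-2-d) = n g * ((d:ℤ) + 1 - g) := by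
  unfold Tc
  split_ifs with h1 h2 h2
  · exfalso; omega
  · rw [Dc_self, Int.toNat_of_nonneg (by omega)]; ring
  · rw [Dc_self, Int.toNat_of_nonneg (by omega)]; ring
  · have : (d:ℤ) + 1 - g = 0 := by omega
    rw [this]; ring

lemma coeff_f (g : ℕ) (f n : ℕ → ℤ) (h : PowerSeries.mk f = expansionSeries g n) (d : ℕ) :
    f d = ∑ m ∈ Finset.range (d+1), n m * Dc g m (d - m) := by
  have h2 := congrArg (PowerSeries.coeff (R := ℤ) d) h
  simpa [expansionSeries, PowerSeries.coeff_mk, Dc] using h2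

lemma fext_sum (g : ℕ) (f n : ℕ → ℤ) (h : PowerSeries.mk f = expansionSeries g n)
    (fext : ℤ → ℤ) (hfext : ∀ d : ℤ, fext d = if 0 ≤ d then f d.toNat else 0)
    (e : ℤ) (N : ℕ) (hN : e < N) :
    fext e = ∑ m ∈ Finset.range N, Tc g n m e := by
  rcases le_or_gt 0 e with he | he
  · rw [hfext, if_pos he, coeff_f g f n h]
    have h1 : ∑ m ∈ Finset.range (e.toNat+1), n m * Dc g m (e.toNat - m)
        = ∑ m ∈ Finset.range (e.toNat+1), Tc g n m e := by
      refine Finset.sum_congr rfl fun m hm => ?_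
      simp only [Finset.mem_range] at hm
      rw [Tc, if_pos (by omega), show ((e:ℤ) - m).toNat = e.toNat - m from by omega]
    rw [h1]
    exact Finset.sum_subset (Finset.range_subset_range.mpr (by omega))
      (fun m _ hm => Tc_gt (by simp only [Finset.mem_range] at hm; omega))
  · rw [hfext, if_neg (by omega)]
    exact (Finset.sum_eq_zero fun m _ => Tc_gt (by omega)).symm

lemma a_split (g : ℕ) (f n : ℕ → ℤ) (h : PowerSeries.mk f = expansionSeries g n)
    (fext : ℤ → ℤ) (hfext : ∀ d : ℤ, fext d = if 0 ≤ d then f d.toNat else 0) (d : ℕ) :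
    f d - fext (2*(g:ℤ) - 2 - d) =
      n g * ((d:ℤ)+1-g)
        + ∑ m ∈ Finset.Ico (g+1) (2*g+d+1), (Tc g n m d - Tc g n m (2*(g:ℤ)-2-d)) := by
  have hd : f d = fext (d : ℤ) := by
    rw [hfext, if_pos (by positivity), Int.toNat_natCast]
  rw [hd, fext_sum g f n h fext hfext (d:ℤ) (2*g+d+1) (by omega),
    fext_sum g f n h fext hfext _ (2*g+d+1) (by omega), ← Finset.sum_sub_distrib,
    Finset.range_eq_Ico, ← Finset.sum_Ico_consecutive _ (Nat.zero_le (g+1)) (by omega : g+1 ≤ 2*g+d+1)]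
  congr 1
  rw [← Finset.range_eq_Ico, Finset.sum_range_succ,
    Finset.sum_eq_zero (fun m hm => Tc_lt n (by simp only [Finset.mem_range] at hm; omega) _),
    zero_add, Tc_eq]

/-- With `∑ f_d q^d = ∑_{h≤g} n_h q^{g-h}(1-q)^{2h-2}` (here `n m` records `n_{g-m}`,
so "`n_h = 0` for `h < 0`" reads "`n m = 0` for `m > g`"), the coefficients `n_h`
vanish for all `h < 0` iff there is `c : ℤ` with `f_d - f_{2g-2-d} = c (d+1-g)` for
all `d ≥ 0`, where `f_e = 0` for `e < 0`; in that case `c = n_0`. -/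
theorem expansion_vanishing_iff (g : ℕ) (f n : ℕ → ℤ)
    (h : PowerSeries.mk f = expansionSeries g n)
    (fext : ℤ → ℤ) (hfext : ∀ d : ℤ, fext d = if 0 ≤ d then f d.toNat else 0) :
    ((∀ m : ℕ, g < m → n m = 0) ↔
      ∃ c : ℤ, ∀ d : ℕ, f d - fext (2 * g - 2 - d) = c * ((d : ℤ) + 1 - g)) ∧
    ∀ c : ℤ, (∀ m : ℕ, g < m → n m = 0) →
      (∀ d : ℕ, f d - fext (2 * g - 2 - d) = c * ((d : ℤ) + 1 - g)) → c = n g := by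
  have hsplit := a_split g f n h fext hfext
  have hvan : (∀ m : ℕ, g < m → n m = 0) →
      ∀ d : ℕ, f d - fext (2*(g:ℤ)-2-d) = n g * ((d:ℤ)+1-g) := by
    intro hv d
    rw [hsplit d, Finset.sum_eq_zero, add_zero]
    intro m hm
    simp only [Finset.mem_Ico] at hm
    rw [Tc_nzero (hv m (by omega)), Tc_nzero (hv m (by omega)), sub_zero]
  constructor
  · constructor
    · intro hv
      exact ⟨n g, hvan hv⟩
    · rintro ⟨c, hc⟩ m
      induction m using Nat.strong_induction_on with
      | _ m ih =>
      intro hm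
      -- first show c = n g using d = m - 1
      have htail1 : ∑ m' ∈ Finset.Ico (g+1) (2*g+(m-1)+1),
          (Tc g n m' ((m-1 : ℕ):ℤ) - Tc g n m' (2*(g:ℤ)-2-((m-1:ℕ):ℤ))) = 0 := by
        refine Finset.sum_eq_zero fun m' hm' => ?_
        simp only [Finset.mem_Ico] at hm'
        rcases le_or_gt m' (m-1) with hle | hlt
        · rw [Tc_nzero (ih m' (by omega) (by omega)), Tc_nzero (ih m' (by omega) (by omega))]
          ring
        · rw [Tc_gt (by omega), Tc_gt (by omega)]
          ring
      have h1 := hsplit (m-1)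
      rw [htail1, add_zero] at h1
      have h2 := hc (m-1)
      rw [h1] at h2
      have hX : ((m-1:ℕ):ℤ) + 1 - g = (m:ℤ) - g := by omega
      rw [hX] at h2
      have hcg : n g = c := mul_right_cancel₀ (by omega : (m:ℤ) - g ≠ 0) h2
      -- now d = m
      have htail2 : ∑ m' ∈ Finset.Ico (g+1) (2*g+m+1),
          (Tc g n m' (m:ℤ) - Tc g n m' (2*(g:ℤ)-2-(m:ℤ))) = n m := by
        rw [Finset.sum_eq_single_of_mem m (Finset.mem_Ico.mpr ⟨by omega, by omega⟩)]
        · rw [Tc_self, Tc_gt (by omega), sub_zero]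
        · intro m' hm' hne
          simp only [Finset.mem_Ico] at hm'
          rcases lt_or_gt_of_ne hne with hlt | hgt
          · rw [Tc_nzero (ih m' (by omega) (by omega)), Tc_nzero (ih m' (by omega) (by omega))]
            ring
          · rw [Tc_gt (by omega), Tc_gt (by omega)]
            ring
      have h3 := hsplit m
      rw [htail2] at h3
      have h4 := hc m
      rw [h3, ← hcg] at h4
      linarith
  · intro c hv hc
    have h1 := hvan hv g
    have h2 := hc g
    rw [h1] at h2
    have hX : ((g:ℤ) + 1 - g) = 1 := by ring
    rw [hX, mul_one, mul_one] at h2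
    omega
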